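/- Let α, β ∈ ℍ be similar non-real quaternions (Re α = Re β, |α| = |β|) with β ≠ ᾱ. Then the left evaluation of the polynomial p(z) = (z − α)(z − β) at any γ in the similarity class [α] is given by p^ℓ(γ) = (γ − α)(ᾱ − β); in particular α is the only left zero of p. -/

import Mathlib

open Quaternion

lemma re_mul_comm' (a b : Quaternion ℝ) : (a * b).re = (b * a).re := by
  simp [Quaternion.re_mul]; ring

lemma char_id (γ : Quaternion ℝ) :
    γ ^ 2 = (↑(2 * γ.re) : Quaternion ℝ) * γ - ↑(Quaternion.normSq γ) := by
  have h := Quaternion.star_mul_self γ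
  rw [Quaternion.star_eq_two_re_sub] at h
  have : ((2 * γ.re : ℝ) : Quaternion ℝ) * γ - γ * γ = ↑(Quaternion.normSq γ) := by
    rw [← h]; noncomm_ring
  rw [sq]; linear_combination (norm := noncomm_ring) -this

/-- For similar non-real quaternions α ∼ β with β ≠ ᾱ, the left evaluation of
p(z) = (z−α)(z−β) = z² − z(α+β) + αβ at any γ ∈ [α] equals (γ−α)(ᾱ−β);
in particular α is the only left zero of p. -/
theorem left_eval_chain_degree_two (α β : Quaternion ℝ) (hα : α.im ≠ 0)
    (hre : β.re = α.re) (hnorm : ‖β‖ = ‖α‖) (hne : β ≠ star α) :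
    (∀ γ : Quaternion ℝ, γ.re = α.re → ‖γ‖ = ‖α‖ →
        γ ^ 2 - γ * (α + β) + α * β = (γ - α) * (star α - β)) ∧
    (∀ γ : Quaternion ℝ, γ ^ 2 - γ * (α + β) + α * β = 0 ↔ γ = α) := by
  have part1 : ∀ γ : Quaternion ℝ, γ.re = α.re → ‖γ‖ = ‖α‖ →
      γ ^ 2 - γ * (α + β) + α * β = (γ - α) * (star α - β) := by
    intro γ h1 h2
    have hns : Quaternion.normSq γ = Quaternion.normSq α := by
      rw [Quaternion.normSq_eq_norm_mul_self, Quaternion.normSq_eq_norm_mul_self, h2]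
    have hγ := char_id γ
    rw [h1, hns] at hγ
    have hstar : star α = (↑(2 * α.re) : Quaternion ℝ) - α :=
      Quaternion.star_eq_two_re_sub α
    have hnsα : (↑(Quaternion.normSq α) : Quaternion ℝ) =
        α * ((↑(2 * α.re) : Quaternion ℝ) - α) := by
      rw [← hstar, Quaternion.self_mul_star]
    have hc : (↑(2 * α.re) : Quaternion ℝ) * γ = γ * (↑(2 * α.re) : Quaternion ℝ) :=
      Quaternion.coe_commutes _ _
    rw [hstar, hγ, hnsα, hc]
    noncomm_ring
  refine ⟨part1, fun γ => ⟨fun hz => ?_, fun h => by subst h; noncomm_ring⟩⟩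
  by_contra hγα
  have hq : γ - α ≠ 0 := sub_ne_zero.mpr hγα
  have key : γ * (γ - α) = (γ - α) * β := by
    linear_combination (norm := noncomm_ring) hz
  have hγeq : γ = (γ - α) * β * (γ - α)⁻¹ := by
    rw [eq_mul_inv_iff_mul_eq₀ hq]
    linear_combination (norm := noncomm_ring) key
  have hreγ : γ.re = α.re := by
    rw [hγeq, re_mul_comm']
    rw [← mul_assoc, inv_mul_cancel₀ hq, one_mul, hre]
  have hnγ : ‖γ‖ = ‖α‖ := by
    rw [hγeq, norm_mul, norm_mul, norm_inv, mul_comm, ← mul_assoc,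
      inv_mul_cancel₀ (norm_ne_zero_iff.mpr hq), one_mul, hnorm]
  have := part1 γ hreγ hnγ
  rw [hz] at this
  rcases mul_eq_zero.mp this.symm with h | h
  · exact hγα (sub_eq_zero.mp h)
  · exact hne (sub_eq_zero.mp h).symm
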